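/- Let A be a symmetric positive semidefinite real n×n matrix with ‖A‖ > 0, x ∈ Ω, g = Ax − b, and let d be either the free gradient g^f or the reduced free gradient g^r (with any parameter ᾱ' > 0) at x, with Ad ≠ 0. Then for every step length ᾱ with 0 < ᾱ ≤ 2‖A‖⁻¹, the fixed-step expansion satisfies f(x − ᾱd) ≤ f(x), i.e. the unconstrained cost function does not increase. -/

import Mathlib

open Matrix

/-- Fixed-step expansion: for a symmetric positive semidefinite `A` with `‖A‖ > 0`,
`x ∈ Ω`, and `d` either the free gradient `g^f` or the reduced free gradient `g^r`
(with any parameter `ᾱ' > 0`) at `x` with `Ad ≠ 0`, every step length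
`0 < ᾱ ≤ 2‖A‖⁻¹` does not increase the unconstrained cost function. -/
theorem fixed_step_expansion_decreases_cost (n : ℕ) (A : Matrix (Fin n) (Fin n) ℝ)
    (hA : A.IsSymm) (hpsd : ∀ v : Fin n → ℝ, 0 ≤ v ⬝ᵥ A *ᵥ v)
    (hN : 0 < ‖Matrix.toEuclideanCLM (𝕜 := ℝ) A‖)
    (b l u x : Fin n → ℝ) (hlu : l ≤ u) (hx : l ≤ x ∧ x ≤ u)
    (f : (Fin n → ℝ) → ℝ) (hf : ∀ v, f v = (1 / 2) * (v ⬝ᵥ A *ᵥ v) - v ⬝ᵥ b)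
    (g : Fin n → ℝ) (hg : g = A *ᵥ x - b)
    (α' : ℝ) (hα' : 0 < α') (d : Fin n → ℝ)
    (hd : (∀ j, d j = if x j = l j ∨ x j = u j then 0 else g j) ∨
          (∀ j, d j = if x j = l j ∨ x j = u j then 0
            else if 0 < g j then min ((x j - l j) / α') (g j)
            else max ((x j - u j) / α') (g j)))
    (hAd : A *ᵥ d ≠ 0) :
    ∀ α : ℝ, 0 < α → α ≤ 2 * ‖Matrix.toEuclideanCLM (𝕜 := ℝ) A‖⁻¹ →
      f (x - α • d) ≤ f x := by
  intro α hα hα2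
  set N := ‖Matrix.toEuclideanCLM (𝕜 := ℝ) A‖ with hNdef
  -- d j * d j ≤ d j * g j componentwise
  have hdg : ∀ j, d j * d j ≤ d j * g j := by
    intro j
    rcases hd with hd | hd
    · rw [hd j]; split_ifs with h
      · simp
      · exact le_rfl
    · rw [hd j]; split_ifs with h hgj
      · simp
      · have hxl : l j < x j := lt_of_le_of_ne (hx.1 j) (fun e => h (Or.inl e.symm))
        have h1 : 0 < (x j - l j) / α' := div_pos (by linarith) hα'
        have h2 : 0 < min ((x j - l j) / α') (g j) := lt_min h1 hgj
        have h3 : min ((x j - l j) / α') (g j) ≤ g j := min_le_right _ _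
        nlinarith
      · have hxu : x j < u j := lt_of_le_of_ne (hx.2 j) (fun e => h (Or.inr e))
        have h1 : (x j - u j) / α' < 0 := div_neg_of_neg_of_pos (by linarith) hα'
        have h2 : max ((x j - u j) / α') (g j) ≤ 0 := max_le h1.le (not_lt.mp hgj)
        have h3 : g j ≤ max ((x j - u j) / α') (g j) := le_max_right _ _
        nlinarith
  have hdd_dg : d ⬝ᵥ d ≤ d ⬝ᵥ g := Finset.sum_le_sum fun j _ => hdg j
  -- quadratic form bound via operator norm
  have hquad : d ⬝ᵥ (A *ᵥ d) ≤ N * (d ⬝ᵥ d) := by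
    set D : EuclideanSpace ℝ (Fin n) := (WithLp.equiv 2 (Fin n → ℝ)).symm d with hD
    have h1 : d ⬝ᵥ (A *ᵥ d) = inner ℝ D (Matrix.toEuclideanCLM (𝕜 := ℝ) A D) := by
      rw [hD, WithLp.equiv_symm_apply, Matrix.toEuclideanCLM_toLp,
        EuclideanSpace.inner_toLp_toLp]
      simp [dotProduct_comm]
    have h2 : (d ⬝ᵥ d) = ‖D‖ * ‖D‖ := by
      rw [← real_inner_self_eq_norm_mul_norm, hD, WithLp.equiv_symm_apply,
        EuclideanSpace.inner_toLp_toLp]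
      simp
    calc d ⬝ᵥ (A *ᵥ d) = inner ℝ D (Matrix.toEuclideanCLM (𝕜 := ℝ) A D) := h1
      _ ≤ ‖D‖ * ‖Matrix.toEuclideanCLM (𝕜 := ℝ) A D‖ := real_inner_le_norm _ _
      _ ≤ ‖D‖ * (N * ‖D‖) := by
          gcongr
          exact (Matrix.toEuclideanCLM (𝕜 := ℝ) A).le_opNorm D
      _ = N * (d ⬝ᵥ d) := by rw [h2]; ring
  have hsym : x ⬝ᵥ (A *ᵥ d) = d ⬝ᵥ (A *ᵥ x) := by
    rw [Matrix.dotProduct_mulVec, ← Matrix.mulVec_transpose, hA.eq,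
      dotProduct_comm]
  have hexp : f (x - α • d) = f x - α * (d ⬝ᵥ g) + α ^ 2 / 2 * (d ⬝ᵥ (A *ᵥ d)) := by
    rw [hf, hf, hg]
    simp only [Matrix.mulVec_sub, Matrix.mulVec_smul, sub_dotProduct,
      dotProduct_sub, smul_dotProduct, dotProduct_smul,
      smul_eq_mul]
    rw [hsym]
    ring
  have hdAd : 0 ≤ d ⬝ᵥ (A *ᵥ d) := hpsd d
  have hdd : 0 ≤ d ⬝ᵥ d := Finset.sum_nonneg fun j _ => mul_self_nonneg _
  have hαN : α * N ≤ 2 := by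
    rw [show (2:ℝ) * N⁻¹ = 2 / N by ring] at hα2
    calc α * N ≤ (2 / N) * N := by gcongr
      _ = 2 := by field_simp
  rw [hexp]
  have h5 : α ^ 2 / 2 * (d ⬝ᵥ (A *ᵥ d)) ≤ α ^ 2 / 2 * (N * (d ⬝ᵥ d)) :=
    mul_le_mul_of_nonneg_left hquad (by positivity)
  have h6 : α ^ 2 / 2 * (N * (d ⬝ᵥ d)) = (α * N / 2) * (α * (d ⬝ᵥ d)) := by ring
  have h7 : (α * N / 2) * (α * (d ⬝ᵥ d)) ≤ 1 * (α * (d ⬝ᵥ d)) :=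
    mul_le_mul_of_nonneg_right (by linarith) (by positivity)
  have h8 : α * (d ⬝ᵥ d) ≤ α * (d ⬝ᵥ g) := mul_le_mul_of_nonneg_left hdd_dg hα.le
  linarith
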